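/- Let G be a finite group, a a commuting n-tuple in G, R ≤ C_G(a), and for each i let k_i be the smallest positive integer with a_i^{k_i} ∈ R. Then the map ω : ev_a⁻¹(R) → (ℤ/ℓ)ⁿ × R given by ω(t, z) = (t, a_1^{t_1 − k_1 t_1} ⋯ a_n^{t_n − k_n t_n} · z) is a well-defined group isomorphism. -/

import Mathlib

private lemma aux_pow_mod {G : Type*} [Group G] {ℓ : ℕ} (g : G) (hg : g ^ ℓ = 1) (m : ℕ) :
    g ^ (m % ℓ) = g ^ m := by
  conv_rhs => rw [← Nat.mod_add_div m ℓ]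
  rw [pow_add, pow_mul, hg, one_pow, mul_one]

private lemma aux_pow_val {G : Type*} [Group G] {ℓ : ℕ} [NeZero ℓ] (g : G) (hg : g ^ ℓ = 1)
    (m : ℕ) (x : ZMod ℓ) (h : (m : ZMod ℓ) = x) : g ^ x.val = g ^ m := by
  subst h
  rw [ZMod.val_natCast, aux_pow_mod g hg]

private lemma aux_ofFn_mul {M : Type*} [Monoid M] :
    ∀ {n : ℕ} (f g : Fin n → M), (∀ i j, Commute (g i) (f j)) →
      (List.ofFn fun i => f i * g i).prod = (List.ofFn f).prod * (List.ofFn g).prod := by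
  intro n
  induction n with
  | zero => simp
  | succ n ih =>
    intro f g h
    simp only [List.ofFn_succ, List.prod_cons]
    rw [ih (fun i => f i.succ) (fun i => g i.succ) (fun i j => h _ _)]
    have hc : Commute (g 0) (List.ofFn fun i => f i.succ).prod := by
      apply Commute.list_prod_right
      intro x hx
      obtain ⟨i, rfl⟩ := List.mem_ofFn.mp hx
      exact h 0 _
    rw [mul_assoc, mul_assoc, ← mul_assoc (g 0), hc.eq, mul_assoc]

theorem winding_iso {G : Type*} [Group G] [Fintype G] {n ℓ : ℕ}
    (hpos : 0 < ℓ) (hdvd : Fintype.card G ∣ ℓ)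
    (a : Fin n → G) (hcomm : ∀ i j, Commute (a i) (a j))
    (R : Subgroup G) (hR : R ≤ Subgroup.centralizer (Set.range a))
    (k : Fin n → ℕ) (hk : ∀ i, IsLeast {m : ℕ | 0 < m ∧ a i ^ m ∈ R} (k i)) :
    Set.BijOn
      (fun p : (Fin n → Multiplicative (ZMod ℓ)) × G =>
        (p.1, (List.ofFn fun i =>
          a i ^ (Multiplicative.toAdd (p.1 i) - (k i : ZMod ℓ) * Multiplicative.toAdd (p.1 i)).val).prod
            * p.2))
      {p : (Fin n → Multiplicative (ZMod ℓ)) × G |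
        p.2 ∈ Subgroup.centralizer (Set.range a) ∧
        (List.ofFn fun i => a i ^ (Multiplicative.toAdd (p.1 i)).val).prod * p.2 ∈ R}
      {p : (Fin n → Multiplicative (ZMod ℓ)) × G | p.2 ∈ R} ∧
    ∀ p q : (Fin n → Multiplicative (ZMod ℓ)) × G,
      (p.2 ∈ Subgroup.centralizer (Set.range a) ∧
        (List.ofFn fun i => a i ^ (Multiplicative.toAdd (p.1 i)).val).prod * p.2 ∈ R) →
      (q.2 ∈ Subgroup.centralizer (Set.range a) ∧
        (List.ofFn fun i => a i ^ (Multiplicative.toAdd (q.1 i)).val).prod * q.2 ∈ R) →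
      (fun p : (Fin n → Multiplicative (ZMod ℓ)) × G =>
        (p.1, (List.ofFn fun i =>
          a i ^ (Multiplicative.toAdd (p.1 i) - (k i : ZMod ℓ) * Multiplicative.toAdd (p.1 i)).val).prod
            * p.2)) (p * q)
        = (fun p : (Fin n → Multiplicative (ZMod ℓ)) × G =>
        (p.1, (List.ofFn fun i =>
          a i ^ (Multiplicative.toAdd (p.1 i) - (k i : ZMod ℓ) * Multiplicative.toAdd (p.1 i)).val).prod
            * p.2)) p *
          (fun p : (Fin n → Multiplicative (ZMod ℓ)) × G =>
        (p.1, (List.ofFn fun i =>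
          a i ^ (Multiplicative.toAdd (p.1 i) - (k i : ZMod ℓ) * Multiplicative.toAdd (p.1 i)).val).prod
            * p.2)) q := by
  haveI : NeZero ℓ := ⟨hpos.ne'⟩
  have ha1 : ∀ i, a i ^ ℓ = 1 := by
    obtain ⟨c, rfl⟩ := hdvd
    intro i
    rw [pow_mul, pow_card_eq_one, one_pow]
  have haC : ∀ i, a i ∈ Subgroup.centralizer (Set.range a) := by
    intro i
    rw [Subgroup.mem_centralizer_iff]
    rintro g ⟨j, rfl⟩
    exact (hcomm j i).eq
  -- abbreviation helpers (as plain defs via `have` of equalities is hard; use explicit exprs)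
  have hBC : ∀ t : Fin n → Multiplicative (ZMod ℓ),
      (List.ofFn fun i =>
        a i ^ (Multiplicative.toAdd (t i) - (k i : ZMod ℓ) * Multiplicative.toAdd (t i)).val).prod
        ∈ Subgroup.centralizer (Set.range a) := by
    intro t
    apply Subgroup.list_prod_mem
    intro x hx
    obtain ⟨i, rfl⟩ := List.mem_ofFn.mp hx
    exact pow_mem (haC i) _
  have hcomB : ∀ z : G, z ∈ Subgroup.centralizer (Set.range a) → ∀ e : Fin n → ℕ,
      Commute z (List.ofFn fun i => a i ^ e i).prod := by
    intro z hz e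
    apply Commute.list_prod_right
    intro x hx
    obtain ⟨i, rfl⟩ := List.mem_ofFn.mp hx
    have hzi : Commute z (a i) := (Subgroup.mem_centralizer_iff.mp hz (a i) ⟨i, rfl⟩).symm
    exact hzi.pow_right _
  -- key1 : B t = U t * P t  with U t ∈ R
  have key1 : ∀ t : Fin n → Multiplicative (ZMod ℓ),
      (List.ofFn fun i =>
        a i ^ (Multiplicative.toAdd (t i) - (k i : ZMod ℓ) * Multiplicative.toAdd (t i)).val).prod
      = (List.ofFn fun i => (a i ^ k i) ^ ((-(Multiplicative.toAdd (t i))).val)).prod *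
        (List.ofFn fun i => a i ^ (Multiplicative.toAdd (t i)).val).prod := by
    intro t
    rw [← aux_ofFn_mul (fun i => (a i ^ k i) ^ ((-(Multiplicative.toAdd (t i))).val))
        (fun i => a i ^ (Multiplicative.toAdd (t i)).val)
        (fun i j => ((hcomm i j).pow_pow _ _).pow_right _)]
    congr 1
    refine congrArg List.ofFn (funext fun i => ?_)
    rw [show (a i ^ k i) ^ ((-(Multiplicative.toAdd (t i))).val) *
        a i ^ (Multiplicative.toAdd (t i)).val
        = a i ^ (k i * (-(Multiplicative.toAdd (t i))).val + (Multiplicative.toAdd (t i)).val) by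
      rw [pow_add, pow_mul]]
    exact aux_pow_val _ (ha1 i) _ _ (by push_cast [ZMod.natCast_val, ZMod.cast_id]; ring)
  -- key2 : P t = W t * B t  with W t ∈ R
  have key2 : ∀ t : Fin n → Multiplicative (ZMod ℓ),
      (List.ofFn fun i => a i ^ (Multiplicative.toAdd (t i)).val).prod
      = (List.ofFn fun i => (a i ^ k i) ^ ((Multiplicative.toAdd (t i)).val)).prod *
        (List.ofFn fun i =>
          a i ^ (Multiplicative.toAdd (t i) - (k i : ZMod ℓ) * Multiplicative.toAdd (t i)).val).prod := by
    intro t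
    rw [← aux_ofFn_mul (fun i => (a i ^ k i) ^ ((Multiplicative.toAdd (t i)).val))
        (fun i =>
          a i ^ (Multiplicative.toAdd (t i) - (k i : ZMod ℓ) * Multiplicative.toAdd (t i)).val)
        (fun i j => ((hcomm i j).pow_pow _ _).pow_right _)]
    congr 1
    refine congrArg List.ofFn (funext fun i => ?_)
    rw [show (a i ^ k i) ^ ((Multiplicative.toAdd (t i)).val) *
        a i ^ (Multiplicative.toAdd (t i) - (k i : ZMod ℓ) * Multiplicative.toAdd (t i)).val
        = a i ^ (k i * (Multiplicative.toAdd (t i)).val +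
            (Multiplicative.toAdd (t i) - (k i : ZMod ℓ) * Multiplicative.toAdd (t i)).val) by
      rw [pow_add, pow_mul]]
    exact aux_pow_val _ (ha1 i) _ _ (by push_cast [ZMod.natCast_val, ZMod.cast_id]; ring)
  -- key3 : B (t*s) = B t * B s
  have key3 : ∀ t s : Fin n → Multiplicative (ZMod ℓ),
      (List.ofFn fun i =>
        a i ^ (Multiplicative.toAdd (t i * s i) - (k i : ZMod ℓ) * Multiplicative.toAdd (t i * s i)).val).prod
      = (List.ofFn fun i =>
          a i ^ (Multiplicative.toAdd (t i) - (k i : ZMod ℓ) * Multiplicative.toAdd (t i)).val).prod *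
        (List.ofFn fun i =>
          a i ^ (Multiplicative.toAdd (s i) - (k i : ZMod ℓ) * Multiplicative.toAdd (s i)).val).prod := by
    intro t s
    rw [← aux_ofFn_mul _ _ (fun i j => (hcomm i j).pow_pow _ _)]
    congr 1
    refine congrArg List.ofFn (funext fun i => ?_)
    rw [show a i ^ (Multiplicative.toAdd (t i) - (k i : ZMod ℓ) * Multiplicative.toAdd (t i)).val *
        a i ^ (Multiplicative.toAdd (s i) - (k i : ZMod ℓ) * Multiplicative.toAdd (s i)).val
        = a i ^ ((Multiplicative.toAdd (t i) - (k i : ZMod ℓ) * Multiplicative.toAdd (t i)).val +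
            (Multiplicative.toAdd (s i) - (k i : ZMod ℓ) * Multiplicative.toAdd (s i)).val) by
      rw [pow_add]]
    exact aux_pow_val _ (ha1 i) _ _
      (by push_cast [ZMod.natCast_val, ZMod.cast_id, toAdd_mul]; ring)
  have hUR : ∀ (e : Fin n → ℕ), (List.ofFn fun i => (a i ^ k i) ^ e i).prod ∈ R := by
    intro e
    apply Subgroup.list_prod_mem
    intro x hx
    obtain ⟨i, rfl⟩ := List.mem_ofFn.mp hx
    exact pow_mem (hk i).1.2 _
  constructor
  · refine ⟨?_, ?_, ?_⟩
    · -- MapsTo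
      rintro ⟨t, z⟩ ⟨hz, hPz⟩
      simp only [Set.mem_setOf_eq] at *
      rw [key1 t, mul_assoc]
      exact Subgroup.mul_mem _ (hUR _) hPz
    · -- InjOn
      rintro ⟨t, z⟩ hp ⟨s, w⟩ hq h
      simp only [Prod.mk.injEq] at h
      obtain ⟨rfl, h2⟩ := h
      exact Prod.mk.injEq .. ▸ ⟨rfl, mul_left_cancel h2⟩
    · -- SurjOn
      rintro ⟨t, r⟩ hr
      simp only [Set.mem_setOf_eq] at hr
      refine ⟨(t, ((List.ofFn fun i =>
          a i ^ (Multiplicative.toAdd (t i) - (k i : ZMod ℓ) * Multiplicative.toAdd (t i)).val).prod)⁻¹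
          * r), ⟨?_, ?_⟩, ?_⟩
      · exact Subgroup.mul_mem _ (Subgroup.inv_mem _ (hBC t)) (hR hr)
      · simp only
        rw [key2 t, mul_assoc, mul_inv_cancel_left]
        exact Subgroup.mul_mem _ (hUR _) hr
      · simp only
        rw [mul_inv_cancel_left]
  · -- multiplicativity
    rintro ⟨t, z⟩ ⟨s, w⟩ hp hq
    simp only [Set.mem_setOf_eq] at hp hq
    simp only [Prod.mk_mul_mk, Pi.mul_apply, Prod.mk.injEq]
    refine ⟨trivial, ?_⟩
    rw [key3 t s]
    have h := hcomB z hp.1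
      (fun i => (Multiplicative.toAdd (s i) - (k i : ZMod ℓ) * Multiplicative.toAdd (s i)).val)
    rw [mul_assoc, mul_assoc, ← mul_assoc _ z, ← h.eq, mul_assoc]
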